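/- Let w = (x, y) ∈ ℝ² be a vector with irrational slope y/x (x ≠ 0). Then for every ε > 0 there exists A ∈ SL(2,ℤ) with ‖Aw‖ < ε. -/

import Mathlib

open GenContFract (of)
open GenContFract

lemma contsAux_int (v : ℝ) :
    ∀ n : ℕ, (∃ p : ℤ, (((of v).contsAux n).a) = p) ∧ ∃ q : ℤ, (((of v).contsAux n).b) = q := by
  have key : ∀ n : ℕ,
      ((∃ p : ℤ, (((of v).contsAux n).a) = p) ∧ ∃ q : ℤ, (((of v).contsAux n).b) = q)
      ∧ ((∃ p : ℤ, (((of v).contsAux (n+1)).a) = p) ∧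
          ∃ q : ℤ, (((of v).contsAux (n+1)).b) = q) := by
    intro n
    induction n with
    | zero =>
      refine ⟨⟨⟨1, ?_⟩, ⟨0, ?_⟩⟩, ⟨⟨⌊v⌋, ?_⟩, ⟨1, ?_⟩⟩⟩ <;>
        simp [zeroth_contAux_eq_one_zero, first_contAux_eq_h_one, of_h_eq_floor]
    | succ n ih =>
      refine ⟨ih.2, ?_⟩
      rcases hs : (of v).s.get? n with _ | gp
      · have h2 : (of v).contsAux (n+2) = (of v).contsAux (n+1) := by
          simp [contsAux, hs]
        rw [h2]; exact ih.2
      · have ha : gp.a = 1 := of_partNum_eq_one (partNum_eq_s_a hs)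
        obtain ⟨b, hb⟩ := exists_int_eq_of_partDen (partDen_eq_s_b hs)
        obtain ⟨⟨p0, hp0⟩, ⟨q0, hq0⟩⟩ := ih.1
        obtain ⟨⟨p1, hp1⟩, ⟨q1, hq1⟩⟩ := ih.2
        have h2 : (of v).contsAux (n+2)
            = nextConts gp.a gp.b ((of v).contsAux n) ((of v).contsAux (n+1)) := by
          simp [contsAux, hs]
        rw [h2]
        constructor
        · exact ⟨b * p1 + p0, by simp [nextConts, nextNum, ha, hb, hp0, hp1]⟩
        · exact ⟨b * q1 + q0, by simp [nextConts, nextDen, ha, hb, hq0, hq1]⟩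
  exact fun n => (key n).1

lemma nums_int (v : ℝ) (n : ℕ) : ∃ p : ℤ, (of v).nums n = p := by
  have := (contsAux_int v (n+1)).1
  simpa [num_eq_conts_a, nth_cont_eq_succ_nth_contAux] using this

lemma dens_int (v : ℝ) (n : ℕ) : ∃ q : ℤ, (of v).dens n = q := by
  have := (contsAux_int v (n+1)).2
  simpa [den_eq_conts_b, nth_cont_eq_succ_nth_contAux] using this

/-- The linear action of an integer `2×2` matrix on the Euclidean plane. -/
noncomputable def actE (A : Matrix (Fin 2) (Fin 2) ℤ) (w : EuclideanSpace ℝ (Fin 2)) :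
    EuclideanSpace ℝ (Fin 2) :=
  (show EuclideanSpace ℝ (Fin 2) from WithLp.toLp 2 (fun i => ∑ j, (A i j : ℝ) * w j))

/-- If `w = (x,y)` has irrational slope `y/x`, then for every `ε > 0` there is
`A ∈ SL(2,ℤ)` with `‖Aw‖ < ε` (Euclidean norm). -/
theorem exists_sl2_shrinking (w : EuclideanSpace ℝ (Fin 2)) (hx : w 0 ≠ 0)
    (hirr : Irrational (w 1 / w 0)) (ε : ℝ) (hε : 0 < ε) :
    ∃ A : Matrix (Fin 2) (Fin 2) ℤ, A.det = 1 ∧ ‖actE A w‖ < ε := by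
  set x := w 0 with hxdef
  set y := w 1 with hydef
  set α := y / x with hα
  have hy : y = α * x := by rw [hα, div_mul_cancel₀ y hx]
  -- non-termination
  have hterm : ∀ n, ¬(of α).TerminatedAt n := by
    intro n h
    have hT : (of α).Terminates := ⟨n, h⟩
    rw [terminates_iff_rat] at hT
    obtain ⟨q, hq⟩ := hT
    exact hirr ⟨q, hq.symm⟩
  -- denominators are at least 1
  have hd1 : ∀ n, (1:ℝ) ≤ (of α).dens n := by
    intro n
    induction n with
    | zero => simp [zeroth_den_eq_one]
    | succ n ih => exact ih.trans (of_den_mono)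
  have hdpos : ∀ n, (0:ℝ) < (of α).dens n := fun n => lt_of_lt_of_le one_pos (hd1 n)
  -- approximation bound
  have hbound : ∀ k, |α * (of α).dens k - (of α).nums k| ≤ 1 / (of α).dens (k+1) := by
    intro k
    have h1 := abs_sub_convs_le (hterm k)
    rw [conv_eq_num_div_den] at h1
    have hB := hdpos k
    have hB' := hdpos (k+1)
    have e : (α - (of α).nums k / (of α).dens k) * (of α).dens k
        = α * (of α).dens k - (of α).nums k := by
      field_simp
    rw [← e, abs_mul, abs_of_pos hB]
    calc |α - (of α).nums k / (of α).dens k| * (of α).dens k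
        ≤ (1 / ((of α).dens k * (of α).dens (k+1))) * (of α).dens k := by
          exact mul_le_mul_of_nonneg_right h1 hB.le
      _ = 1 / (of α).dens (k+1) := by field_simp
  -- pick n large
  set n : ℕ := max 3 ⌈2 * |x| / ε⌉₊ with hn
  have hn3 : 3 ≤ n := le_max_left _ _
  have hfib : ((n:ℝ) + 2) ≤ (of α).dens (n+1) := by
    have h1 : (Nat.fib (n+2) : ℝ) ≤ (of α).dens (n+1) := by
      have := succ_nth_fib_le_of_nth_den (v := α) (n := n+1) (Or.inr (by simpa using hterm n))
      simpa using this
    have h2 : (n+2 : ℕ) ≤ Nat.fib (n+2) := Nat.le_fib_self (by omega)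
    calc ((n:ℝ) + 2) = ((n+2 : ℕ) : ℝ) := by push_cast; ring
      _ ≤ (Nat.fib (n+2) : ℝ) := by exact_mod_cast h2
      _ ≤ _ := h1
  have hbig : 2 * |x| / ε < (of α).dens (n+1) := by
    have : (2 * |x| / ε) ≤ (⌈2 * |x| / ε⌉₊ : ℝ) := Nat.le_ceil _
    have hle : (⌈2 * |x| / ε⌉₊ : ℝ) ≤ (n : ℝ) := by exact_mod_cast Nat.cast_le.mpr (le_max_right 3 _)
    nlinarith [hfib]
  -- the two small quantities
  have key : ∀ k, k = n ∨ k = n + 1 →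
      |x| * |α * (of α).dens k - (of α).nums k| < ε / 2 := by
    intro k hk
    have h1 : |α * (of α).dens k - (of α).nums k| ≤ 1 / (of α).dens (n+1) := by
      rcases hk with rfl | rfl
      · exact hbound _
      · refine (hbound (n+1)).trans ?_
        apply one_div_le_one_div_of_le (hdpos (n+1))
        exact of_den_mono
    have hd := hdpos (n+1)
    have h2 : |x| * |α * (of α).dens k - (of α).nums k| ≤ |x| / (of α).dens (n+1) := by
      calc |x| * |α * (of α).dens k - (of α).nums k| ≤ |x| * (1 / (of α).dens (n+1)) :=
            mul_le_mul_of_nonneg_left h1 (abs_nonneg x)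
        _ = |x| / (of α).dens (n+1) := by ring
    have h3 : |x| / (of α).dens (n+1) < ε / 2 := by
      rw [div_lt_iff₀ hd]
      rw [div_lt_iff₀ hε] at hbig
      nlinarith
    linarith
  -- integer convergents
  obtain ⟨p0, hp0⟩ := nums_int α n
  obtain ⟨q0, hq0⟩ := dens_int α n
  obtain ⟨p1, hp1⟩ := nums_int α (n+1)
  obtain ⟨q1, hq1⟩ := dens_int α (n+1)
  -- determinant identity
  have hdetR : (of α).nums n * (of α).dens (n+1) - (of α).dens n * (of α).nums (n+1)
      = (-1 : ℝ) ^ (n+1) := by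
    exact (SimpContFract.of α).determinant (hterm n)
  have hdetZ : p0 * q1 - q0 * p1 = (-1 : ℤ) ^ (n+1) := by
    have : ((p0 * q1 - q0 * p1 : ℤ) : ℝ) = (((-1 : ℤ) ^ (n+1) : ℤ) : ℝ) := by
      push_cast
      rw [← hp0, ← hq0, ← hp1, ← hq1]
      exact hdetR
    exact_mod_cast this
  refine ⟨!![(-1)^n * p0, (-1)^(n+1) * q0; p1, -q1], ?_, ?_⟩
  · rw [Matrix.det_fin_two_of]
    have : (-1:ℤ)^n * p0 * -q1 - (-1)^(n+1) * q0 * p1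
        = (-1)^(n+1) * (p0 * q1 - q0 * p1) := by ring
    rw [this, hdetZ, ← pow_add]
    exact Even.neg_one_pow ⟨n+1, by ring⟩
  · have hu0 : actE !![(-1)^n * p0, (-1)^(n+1) * q0; p1, -q1] w 0
        = (-1:ℝ)^n * ((p0:ℝ) * x - (q0:ℝ) * y) := by
      simp only [actE, WithLp.ofLp_toLp]
      rw [Fin.sum_univ_two]
      simp [actE, Matrix.cons_val_zero, Matrix.cons_val_one]
      ring
    have hu1 : actE !![(-1)^n * p0, (-1)^(n+1) * q0; p1, -q1] w 1
        = (p1:ℝ) * x - (q1:ℝ) * y := by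
      simp only [actE, WithLp.ofLp_toLp]
      rw [Fin.sum_univ_two]
      simp [actE]
      ring
    have habs0 : |actE !![(-1)^n * p0, (-1)^(n+1) * q0; p1, -q1] w 0| < ε / 2 := by
      rw [hu0, abs_mul, abs_pow, abs_neg, abs_one, one_pow, one_mul]
      have : (p0:ℝ) * x - (q0:ℝ) * y = -(x * (α * (of α).dens n - (of α).nums n)) := by
        rw [hp0, hq0] at *
        rw [hy]; ring
      rw [this, abs_neg, abs_mul]
      exact key n (Or.inl rfl)
    have habs1 : |actE !![(-1)^n * p0, (-1)^(n+1) * q0; p1, -q1] w 1| < ε / 2 := by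
      rw [hu1]
      have : (p1:ℝ) * x - (q1:ℝ) * y = -(x * (α * (of α).dens (n+1) - (of α).nums (n+1))) := by
        rw [hp1, hq1] at *
        rw [hy]; ring
      rw [this, abs_neg, abs_mul]
      exact key (n+1) (Or.inr rfl)
    rw [EuclideanSpace.norm_eq, Real.sqrt_lt' hε, Fin.sum_univ_two]
    have h0 := abs_nonneg (actE !![(-1)^n * p0, (-1)^(n+1) * q0; p1, -q1] w 0)
    have h1 := abs_nonneg (actE !![(-1)^n * p0, (-1)^(n+1) * q0; p1, -q1] w 1)
    simp only [Real.norm_eq_abs]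
    nlinarith [habs0, habs1]
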